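/- Let w ∈ Σ_n, let R ∈ R(w) be an rc-graph associated to w, and let R = R₀ ⊂ R₁ ⊂ ⋯ ⊂ R_m (m = ℓ(w₀)−ℓ(w)) be the greedy sequence obtained by repeatedly adjoining the lexicographically smallest missing pair. Then every R_i in this sequence is an rc-graph, i.e. d(R_i) is a reduced word for some permutation in Σ_n. -/

import Mathlib

open MvPolynomial

noncomputable section

/-- The symmetric group `Σ_n` on `{0, …, n-1}` (0-indexed model of `{1, …, n}`). -/
abbrev Perm' (n : ℕ) := Equiv.Perm (Fin n)

/-- The length `ℓ(w)`: the number of inversions of `w`. -/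
def invLength {n : ℕ} (w : Perm' n) : ℕ :=
  (Finset.univ.filter (fun p : Fin n × Fin n => p.1 < p.2 ∧ w p.2 < w p.1)).card

/-- The longest permutation `w₀ = n … 2 1`. -/
def w0 (n : ℕ) : Perm' n := Fin.revPerm

/-- `u ⋖ w` in the Bruhat order: `w = u·(k,l)` where `k < l`, `u k < u l`, and no
position strictly between `k` and `l` has a `u`-value between `u k` and `u l`. -/
def BruhatCover {n : ℕ} (u w : Perm' n) : Prop :=
  ∃ k l : Fin n, k < l ∧ u k < u l ∧
    (∀ i : Fin n, k < i → i < l → ¬(u k < u i ∧ u i < u l)) ∧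
    w = u * Equiv.swap k l

/-- The Bruhat order, generated by its covers. -/
def BruhatLE {n : ℕ} : Perm' n → Perm' n → Prop :=
  Relation.ReflTransGen BruhatCover

/-- `u →^{(k,b)} w` is a labeled cover in the labeled Bruhat order (0-indexed):
`u ⋖ w` with `u⁻¹w = (i,j)`, `i ≤ k < j` and `b = u i`. -/
def IsLabeledCover {n : ℕ} (u w : Perm' n) (k b : ℕ) : Prop :=
  ∃ i j : Fin n, i < j ∧ u i < u j ∧
    (∀ m : Fin n, i < m → m < j → ¬(u i < u m ∧ u m < u j)) ∧
    w = u * Equiv.swap i j ∧ (i : ℕ) ≤ k ∧ k < (j : ℕ) ∧ b = (u i : ℕ)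

/-- Strict lexicographic order on labels `(k,b)`. -/
def lexLt (p q : ℕ × ℕ) : Prop := p.1 < q.1 ∨ (p.1 = q.1 ∧ p.2 < q.2)

/-- A saturated labeled chain of length `m` from `u` to `w` in the labeled Bruhat order. -/
structure LabeledChain (n m : ℕ) (u w : Perm' n) where
  c : Fin (m + 1) → Perm' n
  lab : Fin m → ℕ × ℕ
  c_zero : c 0 = u
  c_last : c (Fin.last m) = w
  step : ∀ i : Fin m, IsLabeledCover (c i.castSucc) (c i.succ) (lab i).1 (lab i).2

/-- A chain is increasing if its labels strictly increase in lexicographic order. -/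
def LabeledChain.Increasing {n m : ℕ} {u w : Perm' n} (γ : LabeledChain n m u w) : Prop :=
  ∀ i j : Fin m, i < j → lexLt (γ.lab i) (γ.lab j)

/-- The type of a chain: `α_k` counts labels with first coordinate `k`. -/
def chainType {n m : ℕ} {u w : Perm' n} (γ : LabeledChain n m u w) : Fin n → ℕ :=
  fun k => (Finset.univ.filter (fun i : Fin m => (γ.lab i).1 = (k : ℕ))).card

/-- `I_α(u,w)`: the number of increasing chains from `u` to `w` of type `α`. -/
def incChainCount (n : ℕ) (u w : Perm' n) (α : Fin n → ℕ) : ℕ :=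
  Nat.card ((m : ℕ) × {γ : LabeledChain n m u w // γ.Increasing ∧ chainType γ = α})

/-- The staircase monomial `x^δ = x₁^{n-1} x₂^{n-2} ⋯ x_{n-1}`. -/
def xDelta (n : ℕ) : MvPolynomial (Fin n) ℤ :=
  ∏ i : Fin n, X i ^ (n - 1 - (i : ℕ))

/-- `S` is the family of Schubert polynomials: `S w₀ = x^δ` and
`S w - s_i·(S w) = (x_i - x_{i+1}) · S (w s_i)` whenever `ℓ(w s_i) < ℓ(w)`. -/
def IsSchubertFamily (n : ℕ) (S : Perm' n → MvPolynomial (Fin n) ℤ) : Prop :=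
  S (w0 n) = xDelta n ∧
  ∀ (w : Perm' n) (i : ℕ) (h : i + 1 < n),
    invLength (w * Equiv.swap (⟨i, by omega⟩ : Fin n) ⟨i + 1, h⟩) < invLength w →
    S w - rename (Equiv.swap (⟨i, by omega⟩ : Fin n) ⟨i + 1, h⟩) (S w) =
      (X (⟨i, by omega⟩ : Fin n) - X ⟨i + 1, h⟩) *
        S (w * Equiv.swap (⟨i, by omega⟩ : Fin n) ⟨i + 1, h⟩)

/-- The ideal generated by the elementary symmetric polynomials `e₁, …, e_n`. -/
def symIdeal (n : ℕ) : Ideal (MvPolynomial (Fin n) ℤ) :=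
  Ideal.span ((fun k => esymm (Fin n) ℤ k) '' Set.Icc 1 n)

/-- `g` is the normal form of `f` modulo the ideal of elementary symmetric polynomials :
`f ≡ g` and every monomial of `g` divides `x^δ`.  (For the degree reverse lexicographic
term order with `x₁ < ⋯ < x_n`, the normal form is exactly the unique such `g`.) -/
def IsNormalForm (n : ℕ) (f g : MvPolynomial (Fin n) ℤ) : Prop :=
  f - g ∈ symIdeal n ∧ ∀ d ∈ g.support, ∀ i : Fin n, d i ≤ n - 1 - (i : ℕ)

def finSubEquiv {n N : ℕ} (h : n ≤ N) : Fin n ≃ {i : Fin N // (i : ℕ) < n} where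
  toFun i := ⟨Fin.castLE h i, i.isLt⟩
  invFun j := ⟨(j.1 : ℕ), j.2⟩
  left_inv i := rfl
  right_inv j := rfl

/-- The standard inclusion `Σ_n ⊂ Σ_N`, extending a permutation by fixed points. -/
def permIncl {n N : ℕ} (h : n ≤ N) (u : Perm' n) : Perm' N :=
  u.extendDomain (finSubEquiv h)

/-- `δ` as an exponent vector. -/
def deltaF (n : ℕ) : Fin n →₀ ℕ :=
  Finsupp.equivFunOnFinite.symm fun i => n - 1 - (i : ℕ)

/-- The type of a chain as an exponent vector. -/
def chainTypeF {n m : ℕ} {u w : Perm' n} (γ : LabeledChain n m u w) : Fin n →₀ ℕ :=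
  Finsupp.equivFunOnFinite.symm (chainType γ)

/-- `δ` as an integral exponent vector. -/
def deltaZ (n : ℕ) : Fin n →₀ ℤ :=
  Finsupp.equivFunOnFinite.symm fun i => ((n - 1 - (i : ℕ) : ℕ) : ℤ)

/-- The type of a chain as an integral exponent vector. -/
def chainTypeZ {n m : ℕ} {u w : Perm' n} (γ : LabeledChain n m u w) : Fin n →₀ ℤ :=
  Finsupp.equivFunOnFinite.symm fun k => ((chainType γ k : ℕ) : ℤ)

/-- The inclusion of polynomials into Laurent polynomials. -/
def toLaurent (n : ℕ) : MvPolynomial (Fin n) ℤ →+* AddMonoidAlgebra ℤ (Fin n →₀ ℤ) :=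
  AddMonoidAlgebra.mapDomainRingHom ℤ (Finsupp.mapRange.addMonoidHom (Nat.castAddMonoidHom ℤ))

/-- The complete homogeneous symmetric polynomial `h_a(x₁, …, x_k)` inside
`ℤ[x₁, …, x_n]` (variables are 0-indexed, so the first `k` variables are used). -/
def hpoly (n k a : ℕ) : MvPolynomial (Fin n) ℤ :=
  ∑ s ∈ (Finset.univ.filter (fun i : Fin n => (i : ℕ) < k)).sym a,
    ((s : Multiset (Fin n)).map X).prod

/-- `h_α = h_{α₁}(x₁) h_{α₂}(x₁,x₂) ⋯ h_{α_{n-1}}(x₁, …, x_{n-1})` (0-indexed `α`). -/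
def hAlpha (n : ℕ) (α : Fin n → ℕ) : MvPolynomial (Fin n) ℤ :=
  ∏ i : Fin n, hpoly n ((i : ℕ) + 1) (α i)

/- ## rc-graphs (0-indexed pairs: the paper's pair `(k,b)` is `(k-1, b-1)`) -/

/-- The linear order on rc-graph positions: `(k,b) ≤ (j,a)  ⇔  k < j, or k = j and b ≥ a`. -/
def rcLE (p q : ℕ × ℕ) : Prop := p.1 < q.1 ∨ (p.1 = q.1 ∧ q.2 ≤ p.2)

instance : DecidableRel rcLE := fun p q => by unfold rcLE; exact inferInstance
instance : IsTrans (ℕ × ℕ) rcLE :=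
  ⟨fun a b c h1 h2 => by unfold rcLE at h1 h2 ⊢; omega⟩
instance : IsAntisymm (ℕ × ℕ) rcLE :=
  ⟨fun a b h1 h2 => by unfold rcLE at h1 h2; rw [Prod.ext_iff]; omega⟩
instance : IsTotal (ℕ × ℕ) rcLE := ⟨fun a b => by unfold rcLE; omega⟩

/-- The adjacent transposition `s_{i+1} = (i, i+1)` (0-indexed positions). -/
def adjT (n : ℕ) (i : ℕ) : Perm' n :=
  if h : i + 1 < n then Equiv.swap ⟨i, by omega⟩ ⟨i + 1, h⟩ else 1

/-- The word `d(R)` of a set of positions: list its elements in the order `rcLE` and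
record `k + b` for each pair (0-indexed version of `k + b - 1`). -/
def rcWord (R : Finset (ℕ × ℕ)) : List ℕ :=
  (R.sort rcLE).map (fun p => p.1 + p.2)

/-- The permutation given by a word in the adjacent transpositions. -/
def wordPerm (n : ℕ) (l : List ℕ) : Perm' n :=
  (l.map (adjT n)).prod

/-- The permutation of a set of rc-positions. -/
def rcPerm (n : ℕ) (R : Finset (ℕ × ℕ)) : Perm' n := wordPerm n (rcWord R)

/-- `R` consists of valid rc-positions: (0-indexed) `k + b + 2 ≤ n`. -/
def IsRC (n : ℕ) (R : Finset (ℕ × ℕ)) : Prop := ∀ p ∈ R, p.1 + p.2 + 2 ≤ n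

/-- `R ∈ 𝓡(w)`: `R` is an rc-graph associated to `w`, i.e. `d(R)` is a reduced word for `w`. -/
def AssocRC (n : ℕ) (R : Finset (ℕ × ℕ)) (w : Perm' n) : Prop :=
  IsRC n R ∧ rcPerm n R = w ∧ R.card = invLength w

/-- All valid rc-positions for `Σ_n`. -/
def fullRC (n : ℕ) : Finset (ℕ × ℕ) :=
  (Finset.range n ×ˢ Finset.range n).filter (fun p => p.1 + p.2 + 2 ≤ n)

/-- One greedy step: adjoin the lexicographically smallest valid pair not in `R`. -/
def GreedyStep (n : ℕ) (R R' : Finset (ℕ × ℕ)) : Prop :=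
  ∃ p : ℕ × ℕ, p ∉ R ∧ p.1 + p.2 + 2 ≤ n ∧
    (∀ q : ℕ × ℕ, q.1 + q.2 + 2 ≤ n → q ∉ R → (p.1 < q.1 ∨ (p.1 = q.1 ∧ p.2 ≤ q.2))) ∧
    R' = insert p R

/-- The exponent of `x_i` in `x^R`. -/
def rcType (n : ℕ) (R : Finset (ℕ × ℕ)) : Fin n → ℕ :=
  fun i => (R.filter (fun p => p.1 = (i : ℕ))).card

/-- `γ = γ(R)`: the chain `γ` is produced from `R` by the greedy sequence. -/
def GreedyRel (n : ℕ) {m : ℕ} (w : Perm' n) (R : Finset (ℕ × ℕ))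
    (γ : LabeledChain n m w (w0 n)) : Prop :=
  ∃ Rs : ℕ → Finset (ℕ × ℕ), Rs 0 = R ∧
    (∀ i < m, GreedyStep n (Rs i) (Rs (i + 1))) ∧
    (∀ i : Fin m, γ.lab i ∉ Rs (i : ℕ) ∧ Rs ((i : ℕ) + 1) = insert (γ.lab i) (Rs (i : ℕ))) ∧
    (∀ i : Fin (m + 1), rcPerm n (Rs (i : ℕ)) = γ.c i)

namespace Aux


def invSet {n : ℕ} (x : Perm' n) : Finset (Fin n × Fin n) :=
  Finset.univ.filter (fun p => p.1 < p.2 ∧ x p.2 < x p.1)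

lemma invLength_eq {n : ℕ} (x : Perm' n) : invLength x = (invSet x).card := rfl

lemma swap_adj_mono {n : ℕ} {a b c d : Fin n} (hab : (a : ℕ) + 1 = b) (hcd : c < d)
    (hne : ¬(c = a ∧ d = b)) : Equiv.swap a b c < Equiv.swap a b d := by
  have hb' : b = ⟨(a:ℕ)+1, by omega⟩ := by exact Fin.ext hab.symm
  rcases eq_or_ne c a with rfl | hca
  · have hdb : d ≠ b := fun h => hne ⟨rfl, h⟩
    have hda : d ≠ c := (ne_of_gt hcd)
    have hd2 : (c:ℕ) + 1 < (d:ℕ) := by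
      rcases Nat.lt_or_ge ((c:ℕ)+1) (d:ℕ) with h | h
      · exact h
      · exfalso; apply hdb; apply Fin.ext; have := hcd; rw [Fin.lt_def] at this; omega
    rw [Equiv.swap_apply_left, Equiv.swap_apply_of_ne_of_ne hda hdb]
    rw [Fin.lt_def, ← hab]; omega
  · rcases eq_or_ne c b with rfl | hcb
    · have hda : d ≠ a := by
        intro h; subst h; rw [Fin.lt_def] at hcd; omega
      have hdb : d ≠ c := (ne_of_gt hcd)
      rw [Equiv.swap_apply_right, Equiv.swap_apply_of_ne_of_ne hda hdb]
      rw [Fin.lt_def] at hcd ⊢; omega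
    · rw [Equiv.swap_apply_of_ne_of_ne hca hcb]
      rcases eq_or_ne d a with rfl | hda
      · rw [Equiv.swap_apply_left, Fin.lt_def]
        rw [Fin.lt_def] at hcd; omega
      · rcases eq_or_ne d b with rfl | hdb
        · rw [Equiv.swap_apply_right]
          rw [Fin.lt_def] at *
          have : (c:ℕ) ≠ (a:ℕ) := fun h => hca (Fin.ext h)
          omega
        · rw [Equiv.swap_apply_of_ne_of_ne hda hdb]; exact hcd

lemma adj_le {n : ℕ} (x : Perm' n) (a b : Fin n) (hab : (a : ℕ) + 1 = b) :
    invLength (x * Equiv.swap a b) ≤ invLength x + 1 := by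
  set s := Equiv.swap a b with hs
  have key : ((invSet (x * s)).erase (a, b)).card ≤ (invSet x).card := by
    apply Finset.card_le_card_of_injOn (fun p => (s p.1, s p.2))
    · intro p hp
      simp only [invSet, Finset.mem_coe, Finset.mem_erase, Finset.mem_filter, Finset.mem_univ, true_and] at hp ⊢
      obtain ⟨hne, h1, h2⟩ := hp
      refine ⟨swap_adj_mono hab h1 ?_, ?_⟩
      · rintro ⟨h3, h4⟩; exact hne (by rw [← h3, ← h4])
      · simpa only [Equiv.Perm.mul_apply] using h2
    · intro p hp q hq hpq
      have h1 : s p.1 = s q.1 := congrArg Prod.fst hpq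
      have h2 : s p.2 = s q.2 := congrArg Prod.snd hpq
      exact Prod.ext (s.injective h1) (s.injective h2)
  have hc : (invSet (x * s)).card ≤ ((invSet (x * s)).erase (a, b)).card + 1 := by
    by_cases hm : (a, b) ∈ invSet (x * s)
    · rw [Finset.card_erase_of_mem hm]
      have : 1 ≤ (invSet (x * s)).card := Finset.card_pos.mpr ⟨_, hm⟩
      omega
    · rw [Finset.erase_eq_of_notMem hm]; omega
  rw [invLength_eq, invLength_eq]
  omega

lemma adj_ge {n : ℕ} (x : Perm' n) (a b : Fin n) (hab : (a : ℕ) + 1 = b) (hx : x a < x b) :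
    invLength x + 1 ≤ invLength (x * Equiv.swap a b) := by
  set s := Equiv.swap a b with hs
  have hmem : (a, b) ∈ invSet (x * s) := by
    simp only [invSet, Finset.mem_filter, Finset.mem_univ, true_and]
    refine ⟨by simp [Fin.lt_def, ← hab], ?_⟩
    simpa [Equiv.Perm.mul_apply, hs] using hx
  have key : (invSet x).card ≤ ((invSet (x * s)).erase (a, b)).card := by
    apply Finset.card_le_card_of_injOn (fun p => (s p.1, s p.2))
    · intro p hp
      simp only [invSet, Finset.mem_coe, Finset.mem_erase, Finset.mem_filter, Finset.mem_univ, true_and] at hp ⊢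
      obtain ⟨h1, h2⟩ := hp
      have hpne : ¬(p.1 = a ∧ p.2 = b) := by
        rintro ⟨h3, h4⟩; rw [h3, h4] at h2; exact absurd hx (not_lt.mpr h2.le)
      refine ⟨?_, swap_adj_mono hab h1 hpne, ?_⟩
      · intro hcon
        have h3 : s p.1 = a := congrArg Prod.fst hcon
        have h4 : s p.2 = b := congrArg Prod.snd hcon
        have : p.1 = s a := by rw [← h3, Equiv.swap_apply_self]
        have hb : p.2 = s b := by rw [← h4, Equiv.swap_apply_self]
        rw [Equiv.swap_apply_left] at this
        rw [Equiv.swap_apply_right] at hb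
        rw [this, hb] at h1
        exact absurd h1 (by simp [Fin.lt_def, ← hab])
      · simpa only [Equiv.Perm.mul_apply, hs, Equiv.swap_apply_self] using h2
    · intro p hp q hq hpq
      exact Prod.ext (s.injective (congrArg Prod.fst hpq)) (s.injective (congrArg Prod.snd hpq))
  rw [invLength_eq, invLength_eq]
  rw [Finset.card_erase_of_mem hmem] at key
  have : 1 ≤ (invSet (x * s)).card := Finset.card_pos.mpr ⟨_, hmem⟩
  omega



lemma key_lt {n : ℕ} : ∀ (d : ℕ) (x : Perm' n) (p q : Fin n), (q : ℕ) - (p : ℕ) = d →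
    p < q → x p < x q → invLength x < invLength (x * Equiv.swap p q) := by
  intro d
  induction d using Nat.strong_induction_on with
  | _ d IH =>
    intro x p q hd hpq hx
    rcases Nat.lt_or_ge ((p : ℕ) + 1) (q : ℕ) with hq2 | hq1
    · -- q ≥ p + 2
      have hq1 : 1 ≤ (q : ℕ) := by omega
      set r : Fin n := ⟨(q : ℕ) - 1, by omega⟩ with hr
      have hrq : (r : ℕ) + 1 = (q : ℕ) := by simp [hr]; omega
      have hpr : p < r := by rw [Fin.lt_def]; simp [hr]; omega
      have hprne : p ≠ r := ne_of_lt hpr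
      have hpqne : p ≠ q := ne_of_lt hpq
      have hrqne : r ≠ q := by rw [Fin.ne_iff_vne]; omega
      set s := Equiv.swap r q with hs
      have hsp : s p = p := Equiv.swap_apply_of_ne_of_ne hprne hpqne
      have hsr : s r = q := Equiv.swap_apply_left _ _
      have hsq : s q = r := Equiv.swap_apply_right _ _
      have hdecomp : Equiv.swap p q = s * Equiv.swap p r * s := by
        have h1 := Equiv.swap_apply_apply s p r
        rw [hsp, hsr] at h1
        rw [h1, Equiv.swap_inv]
      set x' := x * s with hx'
      have hx'p : x' p = x p := by rw [hx', Equiv.Perm.mul_apply, hsp]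
      have hx'r : x' r = x q := by rw [hx', Equiv.Perm.mul_apply, hsr]
      have hIH : invLength x' < invLength (x' * Equiv.swap p r) := by
        apply IH ((r : ℕ) - (p : ℕ)) (by omega) x' p r (rfl) hpr
        rw [hx'p, hx'r]; exact hx
      set z := x' * Equiv.swap p r with hz
      have hzr : z r = x p := by
        rw [hz, Equiv.Perm.mul_apply, Equiv.swap_apply_right, hx'p]
      have hzq : z q = x r := by
        rw [hz, Equiv.Perm.mul_apply, Equiv.swap_apply_of_ne_of_ne hpqne.symm hrqne.symm,
          hx', Equiv.Perm.mul_apply, hsq]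
      have hgoal : x * Equiv.swap p q = z * s := by
        rw [hdecomp, hz, hx']; group
      rw [hgoal]
      have hxrp : x r ≠ x p := fun h => hprne (x.injective h).symm
      rcases Nat.lt_or_ge (x p : ℕ) (x r : ℕ) with hc | hc
      · -- case A : x p < x r
        have h1 : invLength z + 1 ≤ invLength (z * s) := by
          rw [hs]; exact adj_ge z r q hrq (by rw [hzr, hzq, Fin.lt_def]; exact hc)
        have h2 : invLength x ≤ invLength x' + 1 := by
          have h3 := adj_le x' r q hrq
          have h4 : x' * Equiv.swap r q = x := by
            rw [hx', hs, mul_assoc, Equiv.swap_mul_self, mul_one]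
          rw [h4] at h3; exact h3
        omega
      · -- case B : x r < x p < x q
        have hc' : x r < x q := by
          rw [Fin.lt_def] at hx ⊢
          have : (x r : ℕ) ≠ (x p : ℕ) := fun h => hxrp (Fin.ext h)
          omega
        have h1 : invLength x + 1 ≤ invLength x' := by
          have := adj_ge x r q hrq hc'
          rw [← hs] at this; exact this
        have h2 : invLength z ≤ invLength (z * s) + 1 := by
          have h3 := adj_le (z * s) r q hrq
          have h4 : z * s * Equiv.swap r q = z := by
            rw [hs, mul_assoc, Equiv.swap_mul_self, mul_one]
          rw [hs] at h3
          rw [h4] at h3; exact h3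
        omega
    · -- adjacent case
      have hq : (p : ℕ) + 1 = (q : ℕ) := by
        rw [Fin.lt_def] at hpq; omega
      have := adj_ge x p q hq hx
      omega

lemma wordPerm_nil {n : ℕ} : wordPerm n [] = 1 := rfl

lemma wordPerm_cons {n : ℕ} (a : ℕ) (l : List ℕ) :
    wordPerm n (a :: l) = adjT n a * wordPerm n l := by
  simp [wordPerm]

lemma wordPerm_append {n : ℕ} (l₁ l₂ : List ℕ) :
    wordPerm n (l₁ ++ l₂) = wordPerm n l₁ * wordPerm n l₂ := by
  simp [wordPerm]

lemma invLength_one {n : ℕ} : invLength (1 : Perm' n) = 0 := by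
  rw [invLength, Finset.card_eq_zero, Finset.filter_eq_empty_iff]
  rintro ⟨p1, p2⟩ -
  simp only [Equiv.Perm.one_apply, not_and]
  intro h1 h2
  exact absurd h1 (not_lt.mpr h2.le)

lemma invLength_wordPerm_le {n : ℕ} (l : List ℕ) : invLength (wordPerm n l) ≤ l.length := by
  induction l using List.reverseRecOn with
  | nil => simp [wordPerm_nil, invLength_one]
  | append_singleton l a ih =>
    rw [wordPerm_append, List.length_append, List.length_singleton]
    have h1 : wordPerm n [a] = adjT n a := by simp [wordPerm]
    rw [h1, adjT]
    by_cases h : a + 1 < n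
    · rw [dif_pos h]
      have := adj_le (wordPerm n l) ⟨a, by omega⟩ ⟨a + 1, h⟩ rfl
      omega
    · rw [dif_neg h, mul_one]; omega

lemma fix_small {n K : ℕ} (l : List ℕ) (hl : ∀ a ∈ l, K + 1 ≤ a) (x : Fin n)
    (hx : (x : ℕ) ≤ K) : wordPerm n l x = x := by
  induction l with
  | nil => rfl
  | cons a l ih =>
    rw [wordPerm_cons, Equiv.Perm.mul_apply, ih (fun b hb => hl b (List.mem_cons_of_mem a hb))]
    have ha : K + 1 ≤ a := hl a List.mem_cons_self
    rw [adjT]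
    by_cases h : a + 1 < n
    · rw [dif_pos h]
      exact Equiv.swap_apply_of_ne_of_ne (by rw [Fin.ne_iff_vne]; simp; omega)
        (by rw [Fin.ne_iff_vne]; simp; omega)
    · rw [dif_neg h]; rfl

lemma big_stays {n K : ℕ} (l : List ℕ) (hl : ∀ a ∈ l, K + 1 ≤ a) (x : Fin n)
    (hx : K + 1 ≤ (x : ℕ)) : K + 1 ≤ ((wordPerm n l x : Fin n) : ℕ) := by
  by_contra hcon
  push_neg at hcon
  have h1 : wordPerm n l (wordPerm n l x) = wordPerm n l x :=
    fix_small l hl _ (by omega)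
  have h2 := congrArg Fin.val ((wordPerm n l).injective h1)
  omega



lemma sort_eq_of {D : Finset (ℕ × ℕ)} {l : List (ℕ × ℕ)} (hs : l.Pairwise rcLE)
    (hp : (l : Multiset (ℕ × ℕ)) = D.val) : D.sort rcLE = l :=
  List.Perm.eq_of_pairwise' (Finset.pairwise_sort _ _) hs
    (Multiset.coe_eq_coe.mp (by rw [Finset.sort_eq, hp]))

lemma sort_split (D : Finset (ℕ × ℕ)) (f : ℕ × ℕ → Prop) [DecidablePred f]
    (hf : ∀ a ∈ D, ∀ b ∈ D, f a → ¬ f b → rcLE a b) :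
    D.sort rcLE = (D.filter f).sort rcLE ++ (D.filter (fun q => ¬ f q)).sort rcLE := by
  apply sort_eq_of
  · rw [List.pairwise_append]
    refine ⟨Finset.pairwise_sort _ _, Finset.pairwise_sort _ _, ?_⟩
    intro a ha b hb
    rw [Finset.mem_sort] at ha hb
    rw [Finset.mem_filter] at ha hb
    exact hf a ha.1 b hb.1 ha.2 hb.2
  · rw [← Multiset.coe_add, Finset.sort_eq, Finset.sort_eq, Finset.filter_val,
      Finset.filter_val, Multiset.filter_add_not]

lemma sort_insert_min (D : Finset (ℕ × ℕ)) (p : ℕ × ℕ) (hp : p ∉ D)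
    (h : ∀ q ∈ D, rcLE p q) :
    (insert p D).sort rcLE = p :: D.sort rcLE :=
  Finset.sort_insert rcLE h hp

lemma sort_row (k b : ℕ) :
    ({k} ×ˢ Finset.range b).sort rcLE = (List.range b).reverse.map (fun c => (k, c)) := by
  induction b with
  | zero => simp
  | succ b ih =>
    have h1 : ({k} ×ˢ Finset.range (b + 1)) = insert (k, b) ({k} ×ˢ Finset.range b) := by
      ext q
      simp only [Finset.mem_product, Finset.mem_singleton, Finset.mem_range,
        Finset.mem_insert, Prod.ext_iff]
      omega
    rw [h1, sort_insert_min _ _ ?h1 ?h2, ih, List.range_succ, List.reverse_append]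
    · simp
    case h1 =>
      simp only [Finset.mem_product, Finset.mem_singleton, Finset.mem_range]
      omega
    case h2 =>
      rintro ⟨q1, q2⟩ hq
      simp only [Finset.mem_product, Finset.mem_singleton, Finset.mem_range] at hq
      right
      constructor
      · exact hq.1.symm
      · omega

def listD (j b : ℕ) : List ℕ := (List.range b).reverse.map (j + ·)

lemma rcWord_row (k b : ℕ) : rcWord ({k} ×ˢ Finset.range b) = listD k b := by
  rw [rcWord, sort_row, listD, List.map_map]
  rfl

lemma wp_listD {n : ℕ} (j b : ℕ) (h : b = 0 ∨ j + b < n) (x : Fin n) :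
    ((wordPerm n (listD j b) x : Fin n) : ℕ) =
      if (x : ℕ) = j then j + b
      else if j < (x : ℕ) ∧ (x : ℕ) ≤ j + b then (x : ℕ) - 1 else (x : ℕ) := by
  induction b with
  | zero =>
    simp only [listD, List.range_zero, List.reverse_nil, List.map_nil]
    have : wordPerm n [] = 1 := rfl
    rw [this]
    simp only [Equiv.Perm.one_apply]
    split_ifs <;> omega
  | succ b ih =>
    have h' : b = 0 ∨ j + b < n := by omega
    have hn : j + b + 1 < n := by rcases h with h | h <;> omega
    have hl : listD j (b + 1) = (j + b) :: listD j b := by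
      rw [listD, List.range_succ, List.reverse_append]
      simp [listD]
    rw [hl, wordPerm_cons, Equiv.Perm.mul_apply]
    rw [adjT, dif_pos hn]
    have hy := ih h'
    set y := wordPerm n (listD j b) x with hy'
    have hxn := x.2
    rw [Equiv.swap_apply_def]
    simp only [Fin.ext_iff, Fin.val_mk]
    split_ifs with hc1 hc2 <;> (try simp only [Fin.val_mk]) <;> split_ifs at hy ⊢ <;> omega



def FullF (n k : ℕ) : Finset (ℕ × ℕ) :=
  (Finset.range k ×ˢ Finset.range n).filter (fun q => q.1 + q.2 + 2 ≤ n)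

lemma mem_FullF {n k : ℕ} {q : ℕ × ℕ} :
    q ∈ FullF n k ↔ q.1 < k ∧ q.1 + q.2 + 2 ≤ n := by
  simp only [FullF, Finset.mem_filter, Finset.mem_product, Finset.mem_range]
  omega

lemma rcWord_mono {X : Finset (ℕ × ℕ)} {g : ℕ → Prop} (h : ∀ q ∈ X, g (q.1 + q.2)) :
    ∀ a ∈ rcWord X, g a := by
  intro a ha
  rw [rcWord, List.mem_map] at ha
  obtain ⟨q, hq, rfl⟩ := ha
  exact h q ((Finset.mem_sort rcLE).mp hq)

lemma wp_full {n : ℕ} : ∀ (k : ℕ) (x : Fin n), k ≤ (x : ℕ) →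
    wordPerm n (rcWord (FullF n k)) x = ⟨(x : ℕ) - k, by omega⟩ := by
  intro k
  induction k with
  | zero =>
    intro x hx
    have h0 : FullF n 0 = ∅ := by
      ext q; simp [mem_FullF]
    rw [h0]
    have : rcWord (∅ : Finset (ℕ × ℕ)) = [] := by simp [rcWord]
    rw [this]
    have : wordPerm n [] = 1 := rfl
    rw [this]
    exact Fin.ext (by simp)
  | succ k ih =>
    intro x hx
    have hn : 0 < n := x.pos
    have hsplit := sort_split (FullF n (k + 1)) (fun q => q.1 < k) ?hf
    case hf =>
      intro a _ b _ ha hb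
      left; omega
    have hfil1 : (FullF n (k + 1)).filter (fun q => q.1 < k) = FullF n k := by
      ext q
      simp only [Finset.mem_filter, mem_FullF]
      omega
    have hfil2 : (FullF n (k + 1)).filter (fun q => ¬ q.1 < k) =
        {k} ×ˢ Finset.range (n - 1 - k) := by
      ext q
      simp only [Finset.mem_filter, mem_FullF, Finset.mem_product, Finset.mem_singleton,
        Finset.mem_range]
      omega
    have hword : rcWord (FullF n (k + 1)) = rcWord (FullF n k) ++ listD k (n - 1 - k) := by
      rw [rcWord, hsplit, hfil1, hfil2, List.map_append, ← rcWord, ← rcWord, rcWord_row]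
    rw [hword, wordPerm_append, Equiv.Perm.mul_apply]
    have hxn := x.2
    have hy := wp_listD (n := n) k (n - 1 - k) (by omega) x
    set y := wordPerm n (listD k (n - 1 - k)) x with hydef
    have hy' : (y : ℕ) = (x : ℕ) - 1 := by
      rw [hy]; split_ifs <;> omega
    have := ih y (by omega)
    rw [this]
    exact Fin.ext (by simp [hy']; omega)




lemma sort_split' (D X Y : Finset (ℕ × ℕ)) (f : ℕ × ℕ → Prop) [DecidablePred f]
    (hX : D.filter f = X) (hY : D.filter (fun q => ¬ f q) = Y)
    (hf : ∀ a ∈ D, ∀ b ∈ D, f a → ¬ f b → rcLE a b) :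
    D.sort rcLE = X.sort rcLE ++ Y.sort rcLE := by
  subst hX hY
  exact sort_split D f hf

lemma greedy_step_preserve (n : ℕ) (D D' : Finset (ℕ × ℕ))
    (hrc : IsRC n D) (hred : D.card = invLength (rcPerm n D))
    (hstep : GreedyStep n D D') :
    IsRC n D' ∧ D'.card = invLength (rcPerm n D') := by
  classical
  obtain ⟨⟨k, b⟩, hpD, hpv, hmin, rfl⟩ := hstep
  simp only at hpv hmin
  have full1 : ∀ j c : ℕ, j < k → j + c + 2 ≤ n → (j, c) ∈ D := by
    intro j c hj hv
    by_contra hmem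
    have := hmin (j, c) hv hmem
    simp only at this
    omega
  have full2 : ∀ c : ℕ, c < b → (k, c) ∈ D := by
    intro c hc
    by_contra hmem
    have := hmin (k, c) (by omega) hmem
    simp only at this
    omega
  have hne : ∀ q ∈ D, ¬(q.1 = k ∧ q.2 = b) := by
    rintro ⟨q1, q2⟩ hq ⟨rfl, rfl⟩
    exact hpD hq
  have hvalid : ∀ q ∈ D, q.1 + q.2 + 2 ≤ n := hrc
  -- the pieces
  set F' := D.filter (fun q => q.1 < k) with hF'
  set A' := D.filter (fun q => q.1 = k ∧ b < q.2) with hA'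
  set B' := D.filter (fun q => q.1 = k ∧ q.2 < b) with hB'
  set C' := D.filter (fun q => k < q.1) with hC'
  set R1 := D.filter (fun q => k ≤ q.1) with hR1
  set R2 := D.filter (fun q => k ≤ q.1 ∧ ¬(q.1 = k ∧ b < q.2)) with hR2
  have memR1 : ∀ q, q ∈ R1 ↔ q ∈ D ∧ k ≤ q.1 := by
    intro q; rw [hR1, Finset.mem_filter]
  have memR2 : ∀ q, q ∈ R2 ↔ q ∈ D ∧ k ≤ q.1 ∧ ¬(q.1 = k ∧ b < q.2) := by
    intro q; rw [hR2, Finset.mem_filter]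
  -- decomposition of D.sort
  have s1 : D.sort rcLE = F'.sort rcLE ++ R1.sort rcLE := by
    apply sort_split' D F' R1 (fun q => q.1 < k)
    · rw [hF']
    · rw [hR1]; apply Finset.filter_congr; intro q hq; simp only [not_lt, decide_eq_true_eq]
    · intro a _ c _ ha hc; left; omega
  have s2 : R1.sort rcLE = A'.sort rcLE ++ R2.sort rcLE := by
    apply sort_split' R1 A' R2 (fun q => q.1 = k ∧ b < q.2)
    · rw [hA', hR1, Finset.filter_filter]
      ext q
      simp only [Finset.mem_filter]
      constructor
      · rintro ⟨h1, _, h3⟩; exact ⟨h1, h3⟩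
      · rintro ⟨h1, h3⟩; exact ⟨h1, by omega, h3⟩
    · rw [hR2, hR1, Finset.filter_filter]
    · intro a haR c hcR ha hc
      rw [memR1] at haR hcR
      unfold rcLE
      rcases Nat.lt_or_ge k c.1 with h | h
      · left; omega
      · have hc2 : c.2 ≠ b := fun hb => hne c hcR.1 ⟨by omega, hb⟩
        right; constructor
        · omega
        · omega
  have s3 : R2.sort rcLE = B'.sort rcLE ++ C'.sort rcLE := by
    apply sort_split' R2 B' C' (fun q => q.1 = k)
    · rw [hB', hR2, Finset.filter_filter]
      ext q
      simp only [Finset.mem_filter]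
      constructor
      · rintro ⟨h1, ⟨h2, h3⟩, h4⟩
        have := hne q h1
        exact ⟨h1, h4, by omega⟩
      · rintro ⟨h1, h3, h4⟩
        exact ⟨h1, ⟨by omega, by omega⟩, h3⟩
    · rw [hC', hR2, Finset.filter_filter]
      ext q
      simp only [Finset.mem_filter]
      constructor
      · rintro ⟨h1, ⟨h2, h3⟩, h4⟩
        exact ⟨h1, by omega⟩
      · rintro ⟨h1, h2⟩
        exact ⟨h1, ⟨by omega, by omega⟩, by omega⟩
    · intro a haR c hcR ha hc
      rw [memR2] at haR hcR
      left
      omega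
  -- decomposition of (insert (k,b) D).sort
  have t1 : (insert (k, b) D).sort rcLE =
      F'.sort rcLE ++ (insert (k, b) R1).sort rcLE := by
    apply sort_split' _ _ _ (fun q => q.1 < k)
    · rw [Finset.filter_insert, if_neg (by omega), hF']
    · rw [Finset.filter_insert]
      rw [if_pos (by simp only [not_lt]; omega)]
      rw [hR1]
      congr 1
      apply Finset.filter_congr; intro q hq; simp only [not_lt, decide_eq_true_eq]
    · intro a _ c _ ha hc; left; omega
  have t2 : (insert (k, b) R1).sort rcLE =
      A'.sort rcLE ++ (insert (k, b) R2).sort rcLE := by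
    apply sort_split' _ _ _ (fun q => q.1 = k ∧ b < q.2)
    · rw [Finset.filter_insert, if_neg (by simp only; omega), hA', hR1, Finset.filter_filter]
      ext q
      simp only [Finset.mem_filter]
      constructor
      · rintro ⟨h1, _, h3⟩; exact ⟨h1, h3⟩
      · rintro ⟨h1, h3⟩; exact ⟨h1, by omega, h3⟩
    · rw [Finset.filter_insert, if_pos (by simp only; omega), hR2, hR1, Finset.filter_filter]
    · intro a haR c hcR ha hc
      rw [Finset.mem_insert, memR1] at haR hcR
      unfold rcLE
      have hc1 : k ≤ c.1 := by
        rcases hcR with rfl | hcR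
        · simp
        · omega
      rcases Nat.lt_or_ge k c.1 with h | h
      · left; omega
      · right
        have hc2 : c.2 ≤ b := by
          rcases hcR with rfl | hcR
          · simp
          · have := hne c hcR.1
            omega
        rcases haR with rfl | haR
        · exact absurd ha (by simp)
        · omega
  have t3 : (insert (k, b) R2).sort rcLE = (k, b) :: R2.sort rcLE := by
    apply sort_insert_min
    · rw [memR2]
      rintro ⟨h, -⟩
      exact hpD h
    · intro q hq
      rw [memR2] at hq
      unfold rcLE
      rcases Nat.lt_or_ge k q.1 with h | h
      · left; omega
      · right; constructor
        · omega
        · omega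
  -- words
  have hwD : rcWord D = rcWord F' ++ (rcWord A' ++ (rcWord B' ++ rcWord C')) := by
    rw [rcWord, s1, s2, s3]
    simp only [List.map_append, rcWord, List.append_assoc]
  have hwD' : rcWord (insert (k, b) D) =
      rcWord F' ++ (rcWord A' ++ ((k + b) :: (rcWord B' ++ rcWord C'))) := by
    rw [rcWord, t1, t2, t3, s3]
    simp only [List.map_append, List.map_cons, rcWord, List.append_assoc]
  -- permutations
  set Fp := wordPerm n (rcWord F') with hFp
  set Ap := wordPerm n (rcWord A') with hAp
  set Bp := wordPerm n (rcWord B') with hBp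
  set Cp := wordPerm n (rcWord C') with hCp
  set u := Fp * Ap with hu
  set v := Bp * Cp with hv
  have hx0 : rcPerm n D = u * v := by
    rw [rcPerm, hwD, wordPerm_append, wordPerm_append, wordPerm_append, hu, hv,
      hFp, hAp, hBp, hCp, mul_assoc]
  have hy : rcPerm n (insert (k, b) D) = u * (adjT n (k + b) * v) := by
    rw [rcPerm, hwD', wordPerm_append, wordPerm_append, wordPerm_cons, wordPerm_append,
      hu, hv, hFp, hAp, hBp, hCp]
    group
  -- structure facts
  have hFull : F' = FullF n k := by
    ext ⟨q1, q2⟩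
    rw [hF', Finset.mem_filter, mem_FullF]
    constructor
    · rintro ⟨hq, h1⟩
      exact ⟨h1, hvalid _ hq⟩
    · rintro ⟨h1, h2⟩
      exact ⟨full1 q1 q2 h1 h2, h1⟩
  have hBrow : B' = {k} ×ˢ Finset.range b := by
    ext ⟨q1, q2⟩
    rw [hB', Finset.mem_filter]
    simp only [Finset.mem_product, Finset.mem_singleton, Finset.mem_range]
    constructor
    · rintro ⟨hq, h1, h2⟩
      exact ⟨h1, h2⟩
    · rintro ⟨rfl, h2⟩
      exact ⟨full2 q2 h2, rfl, h2⟩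
  have hA_letters : ∀ a ∈ rcWord A', k + b + 1 ≤ a := by
    apply rcWord_mono
    intro q hq
    rw [hA', Finset.mem_filter] at hq
    omega
  have hC_letters : ∀ a ∈ rcWord C', k + 1 ≤ a := by
    apply rcWord_mono
    intro q hq
    rw [hC', Finset.mem_filter] at hq
    omega
  -- points
  have hn3 : k + b + 2 ≤ n := hpv
  set fa : Fin n := ⟨k + b, by omega⟩ with hfa
  set fb : Fin n := ⟨k + b + 1, by omega⟩ with hfb
  set fk : Fin n := ⟨k, by omega⟩ with hfk
  have hfa' : (fa : ℕ) = k + b := rfl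
  have hfb' : (fb : ℕ) = k + b + 1 := rfl
  have hfk' : (fk : ℕ) = k := rfl
  -- evaluations
  have hu_a : ((u fa : Fin n) : ℕ) = b := by
    rw [hu, Equiv.Perm.mul_apply, hAp, fix_small _ hA_letters fa (by omega),
      hFp, hFull, wp_full k fa (by omega)]
    show (fa : ℕ) - k = b
    rw [hfa']
    omega
  have hu_b : b + 1 ≤ ((u fb : Fin n) : ℕ) := by
    rw [hu, Equiv.Perm.mul_apply]
    have h1 : k + b + 1 ≤ ((Ap fb : Fin n) : ℕ) := by
      rw [hAp]; exact big_stays _ hA_letters fb (by omega)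
    rw [hFp, hFull, wp_full k (Ap fb) (by omega)]
    show b + 1 ≤ ((Ap fb : Fin n) : ℕ) - k
    omega
  have hB_word : rcWord B' = listD k b := by
    rw [hBrow, rcWord_row]
  have hv_k : v fk = fa := by
    rw [hv, Equiv.Perm.mul_apply, hCp, fix_small _ hC_letters fk (by omega), hBp, hB_word]
    apply Fin.ext
    rw [wp_listD k b (by omega) fk, hfa']
    rw [if_pos hfk']
  have hv_small : ∀ x : Fin n, (x : ℕ) < k → v x = x := by
    intro x hx
    rw [hv, Equiv.Perm.mul_apply, hCp, fix_small _ hC_letters x (by omega), hBp, hB_word]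
    apply Fin.ext
    rw [wp_listD k b (by omega) x]
    split_ifs <;> omega
  set Q' := v⁻¹ fb with hQ'
  have hvQ : v Q' = fb := v.apply_symm_apply fb
  have hQ : k < (Q' : ℕ) := by
    rcases lt_trichotomy ((Q' : ℕ)) k with h | h | h
    · have h2 := hv_small Q' h
      rw [h2] at hvQ
      have := congrArg Fin.val hvQ
      rw [hfb'] at this
      omega
    · have hQk : Q' = fk := Fin.ext (by rw [hfk', h])
      rw [hQk, hv_k] at hvQ
      have := congrArg Fin.val hvQ
      rw [hfa', hfb'] at this
      omega
    · exact h
  have hP : v⁻¹ fa = fk := by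
    rw [← hv_k]; exact v.symm_apply_apply fk
  have ht : adjT n (k + b) = Equiv.swap fa fb := by
    rw [adjT, dif_pos (show k + b + 1 < n by omega)]
  have hconj : u * (adjT n (k + b) * v) = (u * v) * Equiv.swap fk Q' := by
    rw [ht, hQ']
    have h := Equiv.swap_apply_apply v⁻¹ fa fb
    rw [hP] at h
    simp only [inv_inv] at h
    rw [h]
    group
  -- apply the key lemma
  have e1 : (u * v) fk = u fa := by rw [Equiv.Perm.mul_apply, hv_k]
  have e2 : (u * v) Q' = u fb := by rw [Equiv.Perm.mul_apply, hvQ]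
  have hlt : (u * v) fk < (u * v) Q' := by
    rw [Fin.lt_def, e1, e2]
    omega
  have hfkQ : fk < Q' := by
    rw [Fin.lt_def, hfk']
    exact hQ
  have hkey := key_lt ((Q' : ℕ) - k) (u * v) fk Q' (by rw [hfk']) hfkQ hlt
  -- conclude
  have hcard : (insert (k, b) D).card = D.card + 1 := Finset.card_insert_of_notMem hpD
  have hup : invLength (rcPerm n (insert (k, b) D)) ≤ (insert (k, b) D).card := by
    have h1 := invLength_wordPerm_le (n := n) (rcWord (insert (k, b) D))
    rw [rcPerm]
    calc invLength (wordPerm n (rcWord (insert (k, b) D)))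
        ≤ (rcWord (insert (k, b) D)).length := h1
      _ = (insert (k, b) D).card := by rw [rcWord, List.length_map, Finset.length_sort]
  have hred' : D.card = invLength (u * v) := by rw [hred, hx0]
  have hdown : D.card + 1 ≤ invLength (rcPerm n (insert (k, b) D)) := by
    rw [hy, hconj]
    omega
  constructor
  · intro q hq
    rw [Finset.mem_insert] at hq
    rcases hq with rfl | hq
    · exact hpv
    · exact hvalid q hq
  · omega


end Aux

/-- For an rc-graph `R` associated to `w`, every member of the greedy
sequence `R = R₀ ⊂ R₁ ⊂ ⋯ ⊂ R_m` (where `m = ℓ(w₀) - ℓ(w)`) is an rc-graph, i.e.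
`d(R_i)` is a reduced word for some permutation. -/
theorem greedy_sequence_is_rc (n : ℕ) (w : Perm' n) (R : Finset (ℕ × ℕ)) (hR : AssocRC n R w)
    (Rs : ℕ → Finset (ℕ × ℕ)) (hR0 : Rs 0 = R)
    (hstep : ∀ i < invLength (w0 n) - invLength w, GreedyStep n (Rs i) (Rs (i + 1))) :
    ∀ i ≤ invLength (w0 n) - invLength w, ∃ v : Perm' n, AssocRC n (Rs i) v := by
  intro i
  induction i with
  | zero =>
    intro _
    exact ⟨w, by rwa [hR0]⟩
  | succ i ih =>
    intro hi
    obtain ⟨vi, hvi⟩ := ih (by omega)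
    have hs := hstep i (by omega)
    have hred : (Rs i).card = invLength (rcPerm n (Rs i)) := by
      rcases hvi with ⟨h1, h2, h3⟩
      rw [h2]
      exact h3
    obtain ⟨h1, h2⟩ := Aux.greedy_step_preserve n (Rs i) (Rs (i + 1)) hvi.1 hred hs
    exact ⟨rcPerm n (Rs (i + 1)), h1, rfl, h2⟩
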